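/- arXiv:1410.3606 — 4 statements merged into one kernel-verified Lean document; each statement's English description precedes it below -/
import Mathlib

section
/- Let 𝒳 be a full additive subcategory of an abelian category 𝒜. A cochain complex S of objects of 𝒜 is 𝒳-acyclic (i.e. Hom_𝒜(X, S) is acyclic for every X ∈ 𝒳) if and only if Hom_𝒜(D, S) is acyclic for every bounded-above complex D with all components in 𝒳. -/
open CategoryTheory Limits CochainComplex.HomComplex

universe w v u

variable {A : Type u} [Category.{v} A] [Abelian A]

/-- The complex of abelian groups `Hom_𝒜(X, S)` for an object `X` and a cochain complex `S`. -/
noncomputable def homCx (X : A) (S : CochainComplex A ℤ) : CochainComplex AddCommGrpCat ℤ :=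
  ((preadditiveCoyoneda.obj (Opposite.op X)).mapHomologicalComplex (ComplexShape.up ℤ)).obj S

/-- A complex `S` is `𝒳`-acyclic if `Hom_𝒜(X, S)` is acyclic for every `X ∈ 𝒳`. -/
def XAcyclic (𝒳 : Set A) (S : CochainComplex A ℤ) : Prop :=
  ∀ X ∈ 𝒳, ∀ n : ℤ, (homCx X S).ExactAt n

/-- A chain map `f` is an `𝒳`-quasi-isomorphism if `Hom_𝒜(X, f)` is a quasi-isomorphism
for every `X ∈ 𝒳`. -/
def XQuasiIso (𝒳 : Set A) {S T : CochainComplex A ℤ} (f : S ⟶ T) : Prop :=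
  ∀ X ∈ 𝒳, QuasiIso (((preadditiveCoyoneda.obj (Opposite.op X)).mapHomologicalComplex
    (ComplexShape.up ℤ)).map f)

/-- The exactness of `homCx X S` at `j`, concretely. -/
lemma homCx_exactAt_iff (X : A) (S : CochainComplex A ℤ) (j : ℤ) :
    (homCx X S).ExactAt j ↔ ∀ w : X ⟶ S.X j, w ≫ S.d j (j+1) = 0 →
      ∃ c : X ⟶ S.X (j-1), c ≫ S.d (j-1) j = w := by
  rw [HomologicalComplex.exactAt_iff' _ (j-1) j (j+1) (by simp) (by simp)]
  rw [ShortComplex.ab_exact_iff]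
  rfl

/-- Downward recursive construction of a primitive cochain. -/
noncomputable def auxY (D S : CochainComplex A ℤ) (m : ℤ) (z : Cochain D S m)
    (cf : ∀ (p i j : ℤ), i + 1 = j → (D.X p ⟶ S.X j) → (D.X p ⟶ S.X i)) :
    ℕ → ∀ p q : ℤ, p + (m - 1) = q → (D.X p ⟶ S.X q)
  | 0 => fun _ _ _ => 0
  | (k+1) => fun p q _ => cf p q (p+m) (by omega)
      (z.v p (p+m) (by omega) - m.negOnePow • (D.d p (p+1) ≫ auxY D S m z cf k (p+1) (p+m) (by omega)))

open ZeroObject in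
/-- The complex concentrated in degree `0` with value (literally) `X`. -/
noncomputable def concCx (X : A) : CochainComplex A ℤ where
  X i := if i = 0 then X else 0
  d _ _ := 0
  shape _ _ _ := rfl
  d_comp_d' _ _ _ _ _ := by simp

lemma concCx_X_zero (X : A) : (concCx X).X 0 = X := by simp [concCx]

open ZeroObject in
lemma concCx_isZero (X : A) (i : ℤ) (hi : i ≠ 0) : IsZero ((concCx X).X i) := by
  have : (concCx X).X i = 0 := if_neg hi
  rw [this]
  exact isZero_zero A

/-- Fact 3.2 (first part): a complex `S` is `𝒳`-acyclic iff `Hom_𝒜(D, S)` is acyclic for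
every bounded-above complex `D` with components in `𝒳`. The Hom complex `Hom_𝒜(D, S)` is
acyclic iff every cocycle in it is a coboundary, which is expressed using the cochains
`Cochain D S m` and the differential `δ`. -/
theorem stmt_0 (𝒳 : Set A) (hzero : ∀ Z : A, IsZero Z → Z ∈ 𝒳) (S : CochainComplex A ℤ) :
    XAcyclic 𝒳 S ↔
      ∀ (D : CochainComplex A ℤ) (n : ℤ), (∀ i : ℤ, i ≤ n → D.X i ∈ 𝒳) →
        (∀ i : ℤ, n < i → IsZero (D.X i)) →
        ∀ (m : ℤ) (z : Cochain D S m), δ m (m + 1) z = 0 →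
          ∃ y : Cochain D S (m - 1), δ (m - 1) m y = z := by
  constructor
  · intro hA D n hmem hz' m z hz
    have hall : ∀ p : ℤ, D.X p ∈ 𝒳 := fun p => by
      by_cases h : p ≤ n
      · exact hmem p h
      · exact hzero _ (hz' p (by omega))
    have H : ∀ (p i j : ℤ), i + 1 = j → ∀ w : D.X p ⟶ S.X j,
        ∃ c : D.X p ⟶ S.X i, (w ≫ S.d j (j+1) = 0 → c ≫ S.d i j = w) := by
      intro p i j hij w
      by_cases hw : w ≫ S.d j (j+1) = 0
      · obtain ⟨c, hc⟩ := (homCx_exactAt_iff (D.X p) S j).1 (hA _ (hall p) j) w hw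
        obtain rfl : i = j - 1 := by omega
        exact ⟨c, fun _ => hc⟩
      · exact ⟨0, fun h => absurd h hw⟩
    choose cf hcf using fun p i j hij w => H p i j hij w
    set yv : ∀ p q : ℤ, p + (m-1) = q → (D.X p ⟶ S.X q) :=
      fun p q hq => auxY D S m z cf (n + 1 - p).toNat p q hq with hyv
    have yv_eq : ∀ p q (hq : p + (m-1) = q), p ≤ n →
        yv p q hq = cf p q (p+m) (by omega)
          (z.v p (p+m) (by omega) - m.negOnePow • (D.d p (p+1) ≫ yv (p+1) (p+m) (by omega))) := by
      intro p q hq hp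
      show auxY D S m z cf (n + 1 - p).toNat p q hq = _
      rw [show (n + 1 - p).toNat = (n + 1 - (p+1)).toNat + 1 by omega]
      rfl
    have key : ∀ (k : ℕ) (p : ℤ), n + 1 - p ≤ k → ∀ (p' q q' : ℤ)
        (h1 : p + 1 = p') (h2 : p + m = q) (h3 : q' + 1 = q),
        yv p q' (by omega) ≫ S.d q' q + m.negOnePow • (D.d p p' ≫ yv p' q (by omega))
          = z.v p q (by omega) := by
      intro k
      induction k with
      | zero =>
        intro p hp p' q q' h1 h2 h3
        exact (hz' p (by omega)).eq_of_src _ _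
      | succ k ih =>
        intro p hp p' q q' h1 h2 h3
        subst h1; subst h2
        obtain rfl : q' = p + m - 1 := by omega
        by_cases hpn : n + 1 ≤ p
        · exact (hz' p (by omega)).eq_of_src _ _
        -- p ≤ n
        have hzc := congrArg (fun (c : Cochain D S (m+1)) => c.v p (p+m+1) (by omega)) hz
        simp only [Cochain.zero_v] at hzc
        rw [δ_v m (m+1) rfl z p (p+m+1) (by omega) (p+m) (p+1) (by omega) rfl] at hzc
        have ihe := ih (p+1) (by omega) (p+2) (p+m+1) (p+m) (by omega) (by omega) (by omega)
        have hw : (z.v p (p+m) (by omega)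
            - m.negOnePow • (D.d p (p+1) ≫ yv (p+1) (p+m) (by omega))) ≫ S.d (p+m) (p+m+1) = 0 := by
          have e1 : yv (p+1) (p+m) (by omega) ≫ S.d (p+m) (p+m+1)
              = z.v (p+1) (p+m+1) (by omega)
                - m.negOnePow • (D.d (p+1) (p+2) ≫ yv (p+2) (p+m+1) (by omega)) :=
            eq_sub_of_add_eq ihe
          have e2 : z.v p (p+m) (by omega) ≫ S.d (p+m) (p+m+1)
              = m.negOnePow • (D.d p (p+1) ≫ z.v (p+1) (p+m+1) (by omega)) := by
            rw [Int.negOnePow_succ] at hzc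
            have := eq_neg_of_add_eq_zero_left hzc
            rw [this]; simp
          rw [Preadditive.sub_comp, e2, Linear.units_smul_comp, Category.assoc, e1]
          simp only [Preadditive.comp_sub, Linear.comp_units_smul, smul_sub, smul_smul,
            Int.units_mul_self, one_smul, HomologicalComplex.d_comp_d_assoc,
            HomologicalComplex.d_comp_d, zero_comp, comp_zero, smul_zero, sub_zero]
          abel
        rw [yv_eq p (p+m-1) (by omega) (by omega)]
        rw [hcf p (p+m-1) (p+m) (by omega) _ hw]
        simp
    refine ⟨Cochain.mk (fun p q hq => yv p q hq), ?_⟩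
    ext p q hpq
    obtain rfl : q = p + m := by omega
    rw [δ_v (m-1) m (by omega) _ p (p+m) (by omega) (p+m-1) (p+1) (by omega) rfl]
    simp only [Cochain.mk_v]
    exact key (n + 1 - p).toNat p (by omega) (p+1) (p+m) (p+m-1) rfl rfl (by omega)
  · intro h X hX n
    rw [homCx_exactAt_iff]
    intro x hx
    set D := concCx X with hD
    set z : Cochain D S n := Cochain.mk (fun p q hpq =>
      if hp : p = 0 then
        eqToHom (by rw [hp]; exact concCx_X_zero X) ≫ x ≫ eqToHom (congrArg S.X (by omega : n = q))
      else 0) with hzdef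
    have hz : δ n (n + 1) z = 0 := by
      ext p q hpq
      rw [Cochain.zero_v]
      by_cases hp : p = 0
      · subst hp
        obtain rfl : q = n + 1 := by omega
        rw [δ_v n (n+1) rfl z 0 (n+1) (by omega) n 1 (by omega) (by omega)]
        have hd : D.d 0 1 = 0 := rfl
        rw [hd, zero_comp, smul_zero, add_zero]
        have hv : z.v 0 n (by omega) =
            eqToHom (concCx_X_zero X) ≫ x ≫ eqToHom (congrArg S.X (by omega : n = n)) := by
          simp [hzdef, Cochain.mk_v]
        rw [hv]
        simp [hx]
      · rw [δ_v n (n+1) rfl z p q hpq (q-1) (p+1) rfl rfl]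
        have h1 : z.v p (q-1) (by omega) = 0 := by simp [hzdef, Cochain.mk_v, hp]
        have hd : D.d p (p+1) = 0 := rfl
        rw [h1, hd]
        simp
    obtain ⟨y, hy⟩ := h D 0
      (fun i hi => by
        by_cases h0 : i = 0
        · subst h0; exact (concCx_X_zero X) ▸ hX
        · exact hzero _ (concCx_isZero X i h0))
      (fun i hi => concCx_isZero X i (by omega)) n z hz
    have hyc := congrArg (fun (c : Cochain D S n) => c.v 0 n (by omega)) hy
    rw [δ_v (n-1) n (by omega) y 0 n (by omega) (n-1) 1 (by omega) (by omega)] at hyc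
    have hd : D.d 0 1 = 0 := rfl
    rw [hd, zero_comp, smul_zero, add_zero] at hyc
    have hv : z.v 0 n (by omega) =
        eqToHom (concCx_X_zero X) ≫ x ≫ eqToHom (congrArg S.X (by omega : n = n)) := by
      simp [hzdef, Cochain.mk_v]
    rw [hv] at hyc
    refine ⟨eqToHom (concCx_X_zero X).symm ≫ y.v 0 (n-1) (by omega), ?_⟩
    rw [Category.assoc, hyc]
    simp
end

section
/- Rickard's criterion: a full triangulated subcategory 𝒞 of a triangulated category 𝒟 is thick (in the sense that whenever a morphism f : X → Y factors through an object of 𝒞 and fits into a distinguished triangle X → Y → Z → X[1] with Z ∈ 𝒞, then X and Y lie in 𝒞) if and only if 𝒞 is closed under direct summands of its objects. -/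
open CategoryTheory Limits Pretriangulated

universe v u

variable {D : Type u} [Category.{v} D] [Preadditive D] [HasZeroObject D] [HasShift D ℤ]
  [∀ n : ℤ, (CategoryTheory.shiftFunctor D n).Additive] [Pretriangulated D]
  [HasBinaryBiproducts D]

/-- Rickard's criterion: a full triangulated subcategory `𝒞` of a triangulated category `D`
(closed under isomorphisms, shifts and cones) is thick — in the sense that whenever a
morphism `f : X ⟶ Y` factors through an object of `𝒞` and fits into a distinguished triangle
`X ⟶ Y ⟶ Z ⟶ X⟦1⟧` with `Z ∈ 𝒞`, then both `X` and `Y` lie in `𝒞` — if and only if `𝒞` is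
closed under direct summands. -/
theorem stmt_3 (C : Set D)
    (hiso : ∀ {X Y : D}, (X ≅ Y) → X ∈ C → Y ∈ C)
    (hshift : ∀ X ∈ C, ∀ n : ℤ, X⟦n⟧ ∈ C)
    (hcone : ∀ T : Triangle D, T ∈ (distTriang D) → T.obj₁ ∈ C → T.obj₂ ∈ C → T.obj₃ ∈ C) :
    (∀ (X Y Z : D) (f : X ⟶ Y),
        (∃ W ∈ C, ∃ (a : X ⟶ W) (b : W ⟶ Y), f = a ≫ b) →
        ∀ (g : Y ⟶ Z) (h : Z ⟶ X⟦(1 : ℤ)⟧),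
          Triangle.mk f g h ∈ (distTriang D) → Z ∈ C → X ∈ C ∧ Y ∈ C) ↔
      (∀ X Y : D, (X ⊞ Y) ∈ C → X ∈ C) := by
  constructor
  · -- thickness criterion implies closed under direct summands
    intro hcrit X Y hXY
    have hB := binaryBiproductTriangle_distinguished X Y (C := D)
    have hIB := inv_rot_of_distTriang _ hB
    have hf0 : ((binaryBiproductTriangle X Y).invRotate).mor₁ = 0 := by
      change -((shiftFunctor D (-1)).map (0 : Y ⟶ X⟦(1:ℤ)⟧) ≫
        (shiftFunctorCompIsoId D (1 : ℤ) (-1) (by omega)).hom.app X) = 0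
      simp
    exact (hcrit _ _ _ _
      ⟨X ⊞ Y, hXY, 0, 0, by rw [zero_comp]; exact hf0⟩ _ _ hIB hXY).2
  · -- closed under direct summands implies the thickness criterion
    rintro hsum X Y Z f ⟨W, hW, a, b, hf⟩ g h hT hZ
    -- the cone `P` of `b ≫ g : W ⟶ Z` lies in `C`
    obtain ⟨P, i, j, hS⟩ := distinguished_cocone_triangle (b ≫ g)
    have hP : P ∈ C := hcone _ hS hW hZ
    have hrotT := rot_of_distTriang _ hT
    -- TR3 : a morphism of triangles `(b, 𝟙 Z, σ)` from the `P`-triangle to the rotated triangle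
    obtain ⟨σ, hσ₁, hσ₂⟩ := complete_distinguished_triangle_morphism
      (Triangle.mk (b ≫ g) i j) ((Triangle.mk f g h).rotate) hS hrotT b (𝟙 Z)
      (by exact Category.comp_id _)
    change P ⟶ (X⟦(1 : ℤ)⟧) at σ
    replace hσ₁ : i ≫ σ = 𝟙 Z ≫ h := hσ₁
    replace hσ₂ : j ≫ b⟦(1 : ℤ)⟧' = σ ≫ (-f⟦(1 : ℤ)⟧') := hσ₂
    rw [Category.id_comp] at hσ₁
    -- hσ₁ : i ≫ σ = h ; hσ₂ : j ≫ b⟦1⟧' = σ ≫ (-f⟦1⟧')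
    have hfg : f ≫ g = 0 := comp_distTriang_mor_zero₁₂ _ hT
    -- construct `s' : X⟦1⟧ ⟶ P` with `s' ≫ j = a⟦1⟧'`
    obtain ⟨s', hs'⟩ := Triangle.coyoneda_exact₃ _ (rot_of_distTriang _ hS)
      (a⟦(1 : ℤ)⟧') (by
        have habg : a ≫ b ≫ g = 0 := by rw [← Category.assoc, ← hf, hfg]
        show a⟦(1 : ℤ)⟧' ≫ (-(b ≫ g)⟦(1 : ℤ)⟧') = 0
        rw [Preadditive.comp_neg, ← Functor.map_comp, habg, Functor.map_zero, neg_zero])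
    change X⟦(1 : ℤ)⟧ ⟶ P at s'
    replace hs' : a⟦(1 : ℤ)⟧' = s' ≫ j := hs'
    -- `(-s') ≫ σ` differs from the identity of `X⟦1⟧` by something killed by `-f⟦1⟧'`
    have key : ((-s') ≫ σ - 𝟙 (X⟦(1 : ℤ)⟧)) ≫ (-f⟦(1 : ℤ)⟧') = 0 := by
      have h2 : σ ≫ (-f⟦(1 : ℤ)⟧') = j ≫ b⟦(1 : ℤ)⟧' := hσ₂.symm
      rw [Preadditive.sub_comp, Category.assoc, h2, Category.id_comp, Preadditive.neg_comp,
        ← Category.assoc, ← hs', ← Functor.map_comp, ← hf]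
      simp
    obtain ⟨w, hw⟩ := Triangle.coyoneda_exact₂ _ (rot_of_distTriang _ hrotT)
      ((-s') ≫ σ - 𝟙 (X⟦(1 : ℤ)⟧)) (by exact key)
    change X⟦(1 : ℤ)⟧ ⟶ Z at w
    replace hw : (-s') ≫ σ - 𝟙 (X⟦(1 : ℤ)⟧) = w ≫ h := hw
    -- the corrected map `s₂` is a section of `σ`
    have hs₂ : ((-s') - w ≫ i) ≫ σ = 𝟙 (X⟦(1 : ℤ)⟧) := by
      have : (-s') ≫ σ = 𝟙 (X⟦(1 : ℤ)⟧) + w ≫ h := by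
        rw [← sub_eq_iff_eq_add']; exact hw
      rw [Preadditive.sub_comp, this, Category.assoc, hσ₁]
      abel
    -- hence `X⟦1⟧` is a direct summand of `P`
    obtain ⟨Q, p, δ, hQ⟩ := distinguished_cocone_triangle ((-s') - w ≫ i)
    have hmono : Mono (Triangle.mk ((-s') - w ≫ i) p δ).mor₁ := by
      change Mono ((-s') - w ≫ i)
      exact ⟨fun u v huv => by
        have := huv =≫ σ
        simpa only [Category.assoc, hs₂, Category.comp_id] using this⟩
    have hδ : δ = 0 := Triangle.mor₃_eq_zero_of_mono₁ _ hQ hmono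
    obtain ⟨e, -, -⟩ := exists_iso_binaryBiproduct_of_distTriang _ hQ hδ
    have hX1 : (X⟦(1 : ℤ)⟧) ∈ C := hsum _ _ (hiso e hP)
    have hX : X ∈ C :=
      hiso ((shiftEquiv D (1 : ℤ)).unitIso.app X).symm (hshift _ hX1 (-1))
    refine ⟨hX, ?_⟩
    exact hcone _ (inv_rot_of_distTriang _ hT) (hshift Z hZ (-1)) hX
end

section
/- Let 𝒳 be a full additive subcategory of an abelian category 𝒜, let S be a complex, D a bounded-above complex with components in 𝒳, and f : S → D an 𝒳-quasi-isomorphism. Then there exists a chain map g : D → S such that f ∘ g is chain homotopic to the identity of D. -/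
open CategoryTheory Limits CochainComplex.HomComplex

universe w v u

variable {A : Type u} [Category.{v} A] [Abelian A]

/-! ### Auxiliary lemmas -/

/-- Lifting property extracted from exactness of `homCx X C` at `k`. -/
lemma homCx_lift {X : A} {C : CochainComplex A ℤ} {k : ℤ}
    (h : (homCx X C).ExactAt k) (v : X ⟶ C.X k) (hv : v ≫ C.d k (k + 1) = 0) :
    ∃ φ : X ⟶ C.X (k - 1), φ ≫ C.d (k - 1) k = v := by
  rw [HomologicalComplex.exactAt_iff' _ (k - 1) k (k + 1) (by simp) (by simp)] at h
  rw [ShortComplex.ab_exact_iff] at h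
  exact h v hv

lemma XIsoOfEq_hom_comp_d (C : CochainComplex A ℤ) {p q : ℤ} (h : p = q) (j : ℤ) :
    (C.XIsoOfEq h).hom ≫ C.d q j = C.d p j := by
  subst h; simp [HomologicalComplex.XIsoOfEq]

/-- The recursive construction of a null-homotopy of `u : D ⟶ C` when `D` is bounded above
and `C` is `Hom(D.X i, -)`-acyclic: at each degree `k`, it produces the component
`φ : D.X k ⟶ C.X (k - 1)` together with the component `ψ` in degree `k + 1` and the
homotopy identity relating them. -/
noncomputable def bigG (C D : CochainComplex A ℤ) (n : ℤ)
    (hD2 : ∀ i : ℤ, n < i → IsZero (D.X i))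
    (hC : ∀ i : ℤ, i ≤ n → ∀ m : ℤ, (homCx (D.X i) C).ExactAt m)
    (u : D ⟶ C) : ∀ k : ℤ, Σ' (φ : D.X k ⟶ C.X (k - 1)) (ψ : D.X (k + 1) ⟶ C.X k),
      φ ≫ C.d (k - 1) k = u.f k - D.d k (k + 1) ≫ ψ :=
  fun k =>
  if hk : n < k then
    ⟨0, 0, by
      have h0 : u.f k = 0 := (hD2 k hk).eq_of_src (u.f k) 0
      simp [h0]⟩
  else
    let p := bigG C D n hD2 hC u (k + 1)
    let ψ : D.X (k + 1) ⟶ C.X k :=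
      p.1 ≫ (C.XIsoOfEq (by omega : k + 1 - 1 = k)).hom
    have hv : (u.f k - D.d k (k + 1) ≫ ψ) ≫ C.d k (k + 1) = 0 := by
      have hp := p.2.2
      have hψ : ψ ≫ C.d k (k + 1) =
          u.f (k + 1) - D.d (k + 1) (k + 1 + 1) ≫ p.2.1 := by
        dsimp only [ψ]
        rw [Category.assoc, XIsoOfEq_hom_comp_d]; exact hp
      rw [Preadditive.sub_comp, Category.assoc, hψ, u.comm k (k + 1)]
      simp
    ⟨(homCx_lift (hC k (not_lt.1 hk) k) _ hv).choose, ψ,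
      (homCx_lift (hC k (not_lt.1 hk) k) _ hv).choose_spec⟩
termination_by k => (n + 1 - k).toNat
decreasing_by omega

lemma bigG_fst_zero (C D : CochainComplex A ℤ) (n : ℤ) (hD2) (hC) (u : D ⟶ C) (k : ℤ)
    (hk : n < k) : (bigG C D n hD2 hC u k).1 = 0 := by
  rw [bigG, dif_pos hk]

lemma bigG_snd_eq (C D : CochainComplex A ℤ) (n : ℤ) (hD2) (hC) (u : D ⟶ C) (k : ℤ) :
    (bigG C D n hD2 hC u k).2.1 =
      (bigG C D n hD2 hC u (k + 1)).1 ≫ (C.XIsoOfEq (by omega : k + 1 - 1 = k)).hom := by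
  by_cases hk : n < k
  · rw [bigG_fst_zero C D n hD2 hC u (k + 1) (by omega), zero_comp]
    rw [bigG, dif_pos hk]
  · conv_lhs => rw [bigG, dif_neg hk]

/-- Any morphism from a bounded above complex `D` to a complex `C` which is
`Hom(D.X i, -)`-acyclic is null-homotopic. -/
lemma exists_nullHomotopy (C D : CochainComplex A ℤ) (n : ℤ)
    (hD2 : ∀ i : ℤ, n < i → IsZero (D.X i))
    (hC : ∀ i : ℤ, i ≤ n → ∀ m : ℤ, (homCx (D.X i) C).ExactAt m)
    (u : D ⟶ C) : Nonempty (Homotopy u 0) := by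
  set Gk := bigG C D n hD2 hC u with hGk
  refine ⟨{ hom := fun i j => if h : j + 1 = i then
              (Gk i).1 ≫ (C.XIsoOfEq (by omega : i - 1 = j)).hom else 0,
            zero := fun i j h => dif_neg h,
            comm := fun i => ?_ }⟩
  rw [dNext_eq _ (show (ComplexShape.up ℤ).Rel i (i + 1) by simp),
    prevD_eq _ (show (ComplexShape.up ℤ).Rel (i - 1) i by simp)]
  rw [dif_pos rfl, dif_pos (show (i - 1) + 1 = i by omega)]
  have h2 := (Gk i).2.2
  rw [bigG_snd_eq C D n hD2 hC u i] at h2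
  rw [Category.assoc, XIsoOfEq_hom_comp_d]
  rw [h2]
  simp only [HomologicalComplex.zero_f_apply, add_zero]
  rw [← hGk]
  abel

/-- The mapping cone of a quasi-isomorphism is acyclic. -/
lemma coneAcyclic {B : Type*} [Category B] [Abelian B]
    {K L : CochainComplex B ℤ} (φ : K ⟶ L) [QuasiIso φ] (m : ℤ) :
    (CochainComplex.mappingCone φ).ExactAt m := by
  have hW : ObjectProperty.trW (HomotopyCategory.subcategoryAcyclic B)
      ((HomotopyCategory.quotient _ _).map φ) := by
    rw [← HomotopyCategory.quasiIso_eq_trW_subcategoryAcyclic,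
      HomotopyCategory.quotient_map_mem_quasiIso_iff,
      HomologicalComplex.mem_quasiIso_iff]
    infer_instance
  have h := ((ObjectProperty.trW_iff_of_distinguished (HomotopyCategory.subcategoryAcyclic B))
    _ (HomotopyCategory.mappingCone_triangleh_distinguished φ)).1 hW
  exact (HomotopyCategory.quotient_obj_mem_subcategoryAcyclic_iff_exactAt _).1 h m

/-- If `f` is an `𝒳`-quasi-isomorphism, then `Hom(X, mappingCone f)` is acyclic
for all `X ∈ 𝒳`. -/
lemma homCx_cone_exact (𝒳 : Set A) {S D : CochainComplex A ℤ} (f : S ⟶ D)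
    (hf : XQuasiIso 𝒳 f) (X : A) (hX : X ∈ 𝒳) (m : ℤ) :
    (homCx X (CochainComplex.mappingCone f)).ExactAt m := by
  haveI := hf X hX
  have h := coneAcyclic (((preadditiveCoyoneda.obj (Opposite.op X)).mapHomologicalComplex
    (ComplexShape.up ℤ)).map f) m
  exact h.of_iso (CochainComplex.mappingCone.mapHomologicalComplexIso f
    (preadditiveCoyoneda.obj (Opposite.op X))).symm

/-- Lemma 3.6: if `f : S ⟶ D` is an `𝒳`-quasi-isomorphism and `D` is a bounded-above complex
with components in `𝒳`, then there is `g : D ⟶ S` with `f ∘ g` homotopic to the identity. -/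
theorem stmt_4 (𝒳 : Set A) (S D : CochainComplex A ℤ) (n : ℤ)
    (hD1 : ∀ i : ℤ, i ≤ n → D.X i ∈ 𝒳) (hD2 : ∀ i : ℤ, n < i → IsZero (D.X i))
    (f : S ⟶ D) (hf : XQuasiIso 𝒳 f) :
    ∃ g : D ⟶ S, Nonempty (Homotopy (g ≫ f) (𝟙 D)) := by
  open CochainComplex in
  have hC : ∀ i : ℤ, i ≤ n → ∀ m : ℤ,
      (homCx (D.X i) (CochainComplex.mappingCone f)).ExactAt m :=
    fun i hi m => homCx_cone_exact 𝒳 f hf (D.X i) (hD1 i hi) m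
  obtain ⟨ho⟩ := exists_nullHomotopy (CochainComplex.mappingCone f) D n hD2 hC
    (CochainComplex.mappingCone.inr f)
  obtain ⟨z, hz⟩ := (Cochain.equivHomotopy _ _) ho
  rw [Cochain.ofHom_zero, add_zero] at hz
  have hγc : δ 0 1 (z.comp (mappingCone.fst f).1 (neg_add_cancel 1)) = 0 := by
    rw [δ_comp z (mappingCone.fst f).1 (neg_add_cancel 1) 0 2 1 rfl rfl rfl,
      Cocycle.δ_eq_zero, Cochain.comp_zero, ← hz, mappingCone.inr_fst, smul_zero, add_zero]
  let gc : Cocycle D S 0 := Cocycle.mk (z.comp (mappingCone.fst f).1 (neg_add_cancel 1)) 1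
    (zero_add 1) hγc
  let g : D ⟶ S := Cocycle.homOf gc
  have hg : Cochain.ofHom g = z.comp (mappingCone.fst f).1 (neg_add_cancel 1) := by
    simp [g, gc]
  have hδw : δ (-1) 0 (z.comp (mappingCone.snd f) (add_zero (-1))) =
      -Cochain.ofHom (g ≫ f) + Cochain.ofHom (𝟙 D) := by
    rw [δ_comp z (mappingCone.snd f) (add_zero (-1)) 0 1 0 rfl rfl rfl,
      mappingCone.δ_snd, Cochain.comp_neg, ← hz, mappingCone.inr_snd,
      Int.negOnePow_zero, one_smul,
      ← Cochain.comp_assoc_of_third_is_zero_cochain, ← hg, ← Cochain.ofHom_comp]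
  refine ⟨g, ⟨(Cochain.equivHomotopy _ _).symm
    ⟨-(z.comp (mappingCone.snd f) (add_zero (-1))), ?_⟩⟩⟩
  rw [δ_neg, hδw]
  abel
end

section
/- Let 0 → K → M →^g N → 0 be a short exact sequence of complexes over an abelian category 𝒜 such that K = Ker(g) is 𝒳-acyclic and the sequence stays exact after applying Hom_𝒜(X, −) for every X ∈ 𝒳. Then for every bounded-above complex D with components in 𝒳 and every chain map α : D → N, there exists a chain map β : D → M with g ∘ β = α. -/
open CategoryTheory Limits CochainComplex.HomComplex

universe w v u

variable {A : Type u} [Category.{v} A] [Abelian A]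

open Classical in
/-- Auxiliary: pick a lift of `α.f j` compatible with a given `v` in degree `j+1`,
if one exists. -/
noncomputable def pickLift (M N : CochainComplex A ℤ) (g : M ⟶ N) (D : CochainComplex A ℤ)
    (α : D ⟶ N) (j : ℤ) (v : D.X (j+1) ⟶ M.X (j+1)) : D.X j ⟶ M.X j :=
  if h : ∃ f : D.X j ⟶ M.X j, f ≫ g.f j = α.f j ∧ f ≫ M.d j (j+1) = D.d j (j+1) ≫ v
  then h.choose else 0

/-- Auxiliary: the sequence of partial lifts, extended one degree lower at each step. -/
noncomputable def liftSeq (M N : CochainComplex A ℤ) (g : M ⟶ N) (D : CochainComplex A ℤ)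
    (α : D ⟶ N) (n : ℤ) : ℕ → ∀ j : ℤ, (D.X j ⟶ M.X j)
  | 0 => fun _ => 0
  | (k+1) => fun j =>
      if j = n - k then pickLift M N g D α j (liftSeq M N g D α n k (j+1))
      else liftSeq M N g D α n k j

/-- The key one-step lifting lemma. -/
theorem key_step (𝒳 : Set A) (K M N : CochainComplex A ℤ) (i : K ⟶ M) (g : M ⟶ N)
    (w : i ≫ g = 0)
    (hses : ∀ n : ℤ, (ShortComplex.mk (i.f n) (g.f n)
      (by rw [← HomologicalComplex.comp_f, w]; rfl)).ShortExact)
    (hK : XAcyclic 𝒳 K)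
    (hsurj : ∀ X ∈ 𝒳, ∀ n : ℤ, Function.Surjective (fun h : X ⟶ M.X n => h ≫ g.f n))
    (D : CochainComplex A ℤ) (n : ℤ)
    (hD1 : ∀ i : ℤ, i ≤ n → D.X i ∈ 𝒳)
    (α : D ⟶ N) (j : ℤ) (hj : j ≤ n) (v : D.X (j+1) ⟶ M.X (j+1))
    (hv1 : v ≫ g.f (j+1) = α.f (j+1))
    (hv2 : D.d j (j+1) ≫ v ≫ M.d (j+1) (j+2) = 0) :
    ∃ f : D.X j ⟶ M.X j, f ≫ g.f j = α.f j ∧ f ≫ M.d j (j+1) = D.d j (j+1) ≫ v := by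
  obtain ⟨γ, hγ⟩ := hsurj (D.X j) (hD1 j hj) j (α.f j)
  simp only at hγ
  set δ : D.X j ⟶ M.X (j+1) := D.d j (j+1) ≫ v - γ ≫ M.d j (j+1) with hδdef
  have hδg : δ ≫ g.f (j+1) = 0 := by
    simp only [hδdef, Preadditive.sub_comp, Category.assoc, hv1]
    rw [← g.comm j (j+1), reassoc_of% hγ, α.comm j (j+1)]
    simp
  have hse := hses (j+1)
  haveI := hse.mono_f
  obtain ⟨δ', hδ'⟩ := KernelFork.IsLimit.lift' hse.exact.fIsKernel δ hδg
  simp only [Fork.ι_ofι] at hδ'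
  have hse2 := hses (j+2)
  haveI : Mono (i.f (j+2)) := hse2.mono_f
  have hδ'd : δ' ≫ K.d (j+1) (j+2) = 0 := by
    rw [← cancel_mono (i.f (j+2))]
    rw [Category.assoc, ← i.comm (j+1) (j+2), reassoc_of% hδ']
    simp only [hδdef, Preadditive.sub_comp, Category.assoc, zero_comp]
    rw [HomologicalComplex.d_comp_d]
    simpa using hv2
  have h := hK (D.X j) (hD1 j hj) (j+1)
  rw [HomologicalComplex.exactAt_iff' _ j (j+1) (j+2) (by simp) (by simp; ring)] at h
  rw [ShortComplex.ab_exact_iff] at h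
  obtain ⟨ε, hε⟩ := h δ' hδ'd
  obtain ⟨ε, rfl⟩ : ∃ e : D.X j ⟶ K.X j, e = ε := ⟨ε, rfl⟩
  have hε : ε ≫ K.d j (j+1) = δ' := hε
  refine ⟨γ + ε ≫ i.f j, ?_, ?_⟩
  · have : i.f j ≫ g.f j = 0 := by rw [← HomologicalComplex.comp_f, w]; rfl
    simp [Preadditive.add_comp, hγ, this]
  · rw [Preadditive.add_comp, Category.assoc, i.comm j (j+1), ← Category.assoc, hε, hδ']
    simp [hδdef]

/-- Lemma 3.8: given a degreewise short exact sequence `0 → K → M → N → 0` of complexes with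
`K` `𝒳`-acyclic which stays exact after applying `Hom_𝒜(X, −)` for every `X ∈ 𝒳`, every
chain map `α : D ⟶ N` from a bounded-above complex `D` with components in `𝒳` lifts to a
chain map `β : D ⟶ M` with `g ∘ β = α`. -/
theorem stmt_6 (𝒳 : Set A) (K M N : CochainComplex A ℤ) (i : K ⟶ M) (g : M ⟶ N)
    (w : i ≫ g = 0)
    (hses : ∀ n : ℤ, (ShortComplex.mk (i.f n) (g.f n)
      (by rw [← HomologicalComplex.comp_f, w]; rfl)).ShortExact)
    (hK : XAcyclic 𝒳 K)
    (hsurj : ∀ X ∈ 𝒳, ∀ n : ℤ, Function.Surjective (fun h : X ⟶ M.X n => h ≫ g.f n))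
    (D : CochainComplex A ℤ) (n : ℤ)
    (hD1 : ∀ i : ℤ, i ≤ n → D.X i ∈ 𝒳) (hD2 : ∀ i : ℤ, n < i → IsZero (D.X i))
    (α : D ⟶ N) :
    ∃ β : D ⟶ M, β ≫ g = α := by
  set L := liftSeq M N g D α n with hL
  have inv : ∀ k : ℕ, ∀ j : ℤ, n + 1 - k ≤ j →
      (L k j ≫ g.f j = α.f j ∧ L k j ≫ M.d j (j+1) = D.d j (j+1) ≫ L k (j+1)) := by
    intro k
    induction k with
    | zero =>
      intro j hj
      have hz := (hD2 j (by omega)).eq_of_src (α.f j) 0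
      constructor
      · simp [hL, liftSeq, hz]
      · simp [hL, liftSeq]
    | succ k ih =>
      intro j hj
      by_cases hje : j = n - k
      · have hex : ∃ f : D.X j ⟶ M.X j, f ≫ g.f j = α.f j ∧
            f ≫ M.d j (j+1) = D.d j (j+1) ≫ L k (j+1) := by
          apply key_step 𝒳 K M N i g w hses hK hsurj D n hD1 α j (by omega) _
            (ih (j+1) (by omega)).1
          have h2 := (ih (j+1) (by omega)).2
          rw [show (j+1+1 : ℤ) = j+2 from by ring] at h2
          rw [h2, HomologicalComplex.d_comp_d_assoc, zero_comp]
        have e2 : L (k+1) j = hex.choose := by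
          simp only [hL, liftSeq, if_pos hje, pickLift]
          rw [dif_pos (by rw [hL] at hex; exact hex)]
        have e3 : L (k+1) (j+1) = L k (j+1) := by
          simp only [hL, liftSeq]
          rw [if_neg (by omega)]
        obtain ⟨h1, h2⟩ := hex.choose_spec
        exact ⟨by rw [e2]; exact h1, by rw [e2, e3]; exact h2⟩
      · have e1 : L (k+1) j = L k j := by
          simp only [hL, liftSeq]; rw [if_neg hje]
        have e3 : L (k+1) (j+1) = L k (j+1) := by
          simp only [hL, liftSeq]; rw [if_neg (by omega)]
        obtain ⟨h1, h2⟩ := ih j (by omega)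
        exact ⟨by rw [e1]; exact h1, by rw [e1, e3]; exact h2⟩
  have stab1 : ∀ (k : ℕ) (j : ℤ), (n - j : ℤ) < k → L (k+1) j = L k j := by
    intro k j h
    simp only [hL, liftSeq]; rw [if_neg (by omega)]
  have stab : ∀ (j : ℤ) (k k' : ℕ), (n - j : ℤ) < k → k ≤ k' → L k' j = L k j := by
    intro j k k' hk hkk'
    induction k', hkk' using Nat.le_induction with
    | base => rfl
    | succ k' hk' ih => rw [stab1 k' j (by omega), ih]
  have stab2 : ∀ (j : ℤ) (k k' : ℕ), (n - j : ℤ) < k → (n - j : ℤ) < k' →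
      L k j = L k' j := by
    intro j k k' h h'
    rcases le_total k k' with h'' | h''
    · exact (stab j k k' h h'').symm
    · exact stab j k' k h' h''
  have htn : ∀ j : ℤ, (n - j : ℤ) < ((n + 1 - j).toNat : ℤ) := by
    intro j
    have := Int.self_le_toNat (n + 1 - j)
    omega
  refine ⟨{ f := fun j => L ((n + 1 - j).toNat) j, comm' := ?_ }, ?_⟩
  · intro p q hpq
    simp only [ComplexShape.up_Rel] at hpq
    subst hpq
    have h1 := (inv ((n + 1 - p).toNat) p (by have := Int.self_le_toNat (n + 1 - p); omega)).2
    rw [h1, stab2 (p+1) ((n + 1 - p).toNat) ((n + 1 - (p+1)).toNat)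
      (by have := htn p; omega) (by have := htn (p+1); omega)]
  · ext j
    simp only [HomologicalComplex.comp_f]
    exact (inv ((n + 1 - j).toNat) j (by have := Int.self_le_toNat (n + 1 - j); omega)).1
end
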